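/- Let n ≥ 1 be an integer with n ≡ 1 (mod 4). Then for every integer k ≥ 1 one has the upper bound I_{n,k} < ((2k+1)/n²)·(π/2)^{2k}. -/

import Mathlib

open Real MeasureTheory

open intervalIntegral

/-- `I_{n,k} = ∫₀^{π/2} t^{2k+1} sin(nt) dt`. -/
noncomputable def I (n k : ℕ) : ℝ :=
  ∫ t in (0:ℝ)..(π / 2), t ^ (2 * k + 1) * Real.sin ((n : ℝ) * t)

lemma cos_npi2 (n : ℕ) (hn4 : n % 4 = 1) : Real.cos ((n:ℝ) * (π/2)) = 0 := by
  obtain ⟨m, rfl⟩ : ∃ m, n = 4*m+1 := ⟨n/4, by omega⟩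
  have h : ((4*m+1 : ℕ):ℝ) * (π/2) = π/2 + m * (2*π) := by push_cast; ring
  rw [h, Real.cos_add_nat_mul_two_pi, Real.cos_pi_div_two]

lemma sin_npi2 (n : ℕ) (hn4 : n % 4 = 1) : Real.sin ((n:ℝ) * (π/2)) = 1 := by
  obtain ⟨m, rfl⟩ : ∃ m, n = 4*m+1 := ⟨n/4, by omega⟩
  have h : ((4*m+1 : ℕ):ℝ) * (π/2) = π/2 + m * (2*π) := by push_cast; ring
  rw [h, Real.sin_add_nat_mul_two_pi, Real.sin_pi_div_two]

lemma int_sin (n p : ℕ) : IntervalIntegrable (fun t : ℝ => t ^ p * Real.sin ((n:ℝ) * t)) volume 0 (π/2) := by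
  apply Continuous.intervalIntegrable; continuity

lemma int_cos (n p : ℕ) : IntervalIntegrable (fun t : ℝ => t ^ p * Real.cos ((n:ℝ) * t)) volume 0 (π/2) := by
  apply Continuous.intervalIntegrable; continuity

lemma hd_cos (n : ℕ) (hn : 1 ≤ n) (t : ℝ) :
    HasDerivAt (fun t : ℝ => -Real.cos ((n:ℝ)*t) / n) (Real.sin ((n:ℝ)*t)) t := by
  have hn' : (n:ℝ) ≠ 0 := Nat.cast_ne_zero.mpr (by omega)
  have h1 : HasDerivAt (fun t : ℝ => (n:ℝ)*t) n t := by
    simpa using (hasDerivAt_id t).const_mul (n:ℝ)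
  have h2 := ((Real.hasDerivAt_cos ((n:ℝ)*t)).comp t h1).neg.div_const (n:ℝ)
  exact h2.congr_deriv (by field_simp)

lemma hd_sin (n : ℕ) (hn : 1 ≤ n) (t : ℝ) :
    HasDerivAt (fun t : ℝ => Real.sin ((n:ℝ)*t) / n) (Real.cos ((n:ℝ)*t)) t := by
  have hn' : (n:ℝ) ≠ 0 := Nat.cast_ne_zero.mpr (by omega)
  have h1 : HasDerivAt (fun t : ℝ => (n:ℝ)*t) n t := by
    simpa using (hasDerivAt_id t).const_mul (n:ℝ)
  have h2 := ((Real.hasDerivAt_sin ((n:ℝ)*t)).comp t h1).div_const (n:ℝ)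
  exact h2.congr_deriv (by field_simp)

lemma ibp_sin (n p : ℕ) (hn : 1 ≤ n) (hn4 : n % 4 = 1) :
    ∫ t in (0:ℝ)..(π/2), t^(p+1) * Real.sin ((n:ℝ)*t)
      = (((p:ℝ)+1)/n) * ∫ t in (0:ℝ)..(π/2), t^p * Real.cos ((n:ℝ)*t) := by
  have hn' : (n:ℝ) ≠ 0 := Nat.cast_ne_zero.mpr (by omega)
  have hu : ∀ x ∈ Set.uIcc (0:ℝ) (π/2), HasDerivAt (fun t : ℝ => t^(p+1)) (((p:ℝ)+1) * x^p) x := by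
    intro x _; simpa using hasDerivAt_pow (p+1) x
  have hu' : IntervalIntegrable (fun x : ℝ => ((p:ℝ)+1) * x^p) volume 0 (π/2) := by
    apply Continuous.intervalIntegrable; continuity
  have hv' : IntervalIntegrable (fun t : ℝ => Real.sin ((n:ℝ)*t)) volume 0 (π/2) := by
    apply Continuous.intervalIntegrable; continuity
  have key := intervalIntegral.integral_mul_deriv_eq_deriv_mul hu
    (fun x _ => hd_cos n hn x) hu' hv'
  rw [key, cos_npi2 n hn4]
  have heq : ∀ t : ℝ, ((p:ℝ)+1) * t^p * (-Real.cos ((n:ℝ)*t) / n)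
      = -((((p:ℝ)+1)/n) * (t^p * Real.cos ((n:ℝ)*t))) := by
    intro t; ring
  simp only [heq, intervalIntegral.integral_neg, intervalIntegral.integral_const_mul,
    zero_pow (Nat.succ_ne_zero p), Real.cos_zero, mul_zero, neg_zero, zero_div, zero_mul,
    sub_zero, zero_sub, neg_neg, mul_neg, sub_neg_eq_add, zero_add]

lemma ibp_cos (n p : ℕ) (hn : 1 ≤ n) (hn4 : n % 4 = 1) :
    ∫ t in (0:ℝ)..(π/2), t^(p+1) * Real.cos ((n:ℝ)*t)
      = (π/2)^(p+1)/n - (((p:ℝ)+1)/n) * ∫ t in (0:ℝ)..(π/2), t^p * Real.sin ((n:ℝ)*t) := by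
  have hn' : (n:ℝ) ≠ 0 := Nat.cast_ne_zero.mpr (by omega)
  have hu : ∀ x ∈ Set.uIcc (0:ℝ) (π/2), HasDerivAt (fun t : ℝ => t^(p+1)) (((p:ℝ)+1) * x^p) x := by
    intro x _; simpa using hasDerivAt_pow (p+1) x
  have hu' : IntervalIntegrable (fun x : ℝ => ((p:ℝ)+1) * x^p) volume 0 (π/2) := by
    apply Continuous.intervalIntegrable; continuity
  have hv' : IntervalIntegrable (fun t : ℝ => Real.cos ((n:ℝ)*t)) volume 0 (π/2) := by
    apply Continuous.intervalIntegrable; continuity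
  have key := intervalIntegral.integral_mul_deriv_eq_deriv_mul hu
    (fun x _ => hd_sin n hn x) hu' hv'
  rw [key, sin_npi2 n hn4]
  have heq : ∀ t : ℝ, ((p:ℝ)+1) * t^p * (Real.sin ((n:ℝ)*t) / n)
      = (((p:ℝ)+1)/n) * (t^p * Real.sin ((n:ℝ)*t)) := by
    intro t; ring
  simp only [heq, intervalIntegral.integral_const_mul,
    zero_pow (Nat.succ_ne_zero p), mul_zero, zero_mul, zero_div, sub_zero, mul_one]
  ring

lemma base_cos (n : ℕ) (hn : 1 ≤ n) (hn4 : n % 4 = 1) :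
    ∫ t in (0:ℝ)..(π/2), Real.cos ((n:ℝ)*t) = 1/n := by
  have key := intervalIntegral.integral_eq_sub_of_hasDerivAt
    (a := (0:ℝ)) (b := π/2)
    (f := fun t : ℝ => Real.sin ((n:ℝ)*t) / n) (f' := fun t : ℝ => Real.cos ((n:ℝ)*t))
    (fun x _ => hd_sin n hn x)
    (by apply Continuous.intervalIntegrable; continuity)
  rw [key]
  rw [sin_npi2 n hn4]
  simp

lemma crude (n p : ℕ) (hn : 1 ≤ n) :
    ∫ t in (0:ℝ)..(π/2), t^(p+1) * Real.sin ((n:ℝ)*t) < (π/2)^(p+2)/((p:ℝ)+2) := by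
  have hπ := Real.pi_pos
  have hnR : (0:ℝ) < n := by exact_mod_cast hn
  set c : ℝ := π / (2*n) with hc
  have hc0 : 0 < c := by positivity
  have hcle : c ≤ π/2 := by
    have h1n : (1:ℝ) ≤ n := by exact_mod_cast hn
    rw [hc, div_le_div_iff₀ (by positivity) (by norm_num)]
    nlinarith
  have hint : ∀ a b : ℝ, IntervalIntegrable (fun t : ℝ => t^(p+1) * (1 - Real.sin ((n:ℝ)*t))) volume a b := by
    intro a b; apply Continuous.intervalIntegrable; continuity
  have h1 : 0 < ∫ t in (0:ℝ)..c, t^(p+1) * (1 - Real.sin ((n:ℝ)*t)) := by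
    apply intervalIntegral_pos_of_pos_on (hint 0 c) _ hc0
    intro x hx
    have hx0 : 0 < x := hx.1
    have hnx : (n:ℝ) * x < π/2 := by
      have := hx.2
      rw [hc] at this
      calc (n:ℝ) * x < (n:ℝ) * (π/(2*n)) := by
            exact mul_lt_mul_of_pos_left this hnR
        _ = π/2 := by field_simp
    have hs : Real.sin ((n:ℝ)*x) < 1 := by
      have := Real.sin_lt_sin_of_lt_of_le_pi_div_two (x := (n:ℝ)*x) (y := π/2)
        (by nlinarith) le_rfl hnx
      simpa using this
    have : 0 < x^(p+1) := by positivity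
    nlinarith
  have h2 : 0 ≤ ∫ t in c..(π/2), t^(p+1) * (1 - Real.sin ((n:ℝ)*t)) := by
    apply intervalIntegral.integral_nonneg hcle
    intro x hx
    have hx0 : 0 ≤ x := le_trans hc0.le hx.1
    have hs : Real.sin ((n:ℝ)*x) ≤ 1 := Real.sin_le_one _
    have : (0:ℝ) ≤ x^(p+1) := by positivity
    nlinarith
  have hsplit := intervalIntegral.integral_add_adjacent_intervals (hint 0 c) (hint c (π/2))
  have hpos : 0 < ∫ t in (0:ℝ)..(π/2), t^(p+1) * (1 - Real.sin ((n:ℝ)*t)) := by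
    rw [← hsplit]; linarith
  have hpow : ∫ t in (0:ℝ)..(π/2), t^(p+1) = (π/2)^(p+2)/((p:ℝ)+2) := by
    rw [integral_pow]
    push_cast
    rw [zero_pow (by omega : p+1+1 ≠ 0)]
    ring_nf
  have hsub : (∫ t in (0:ℝ)..(π/2), t^(p+1) * (1 - Real.sin ((n:ℝ)*t)))
      = (∫ t in (0:ℝ)..(π/2), t^(p+1)) - ∫ t in (0:ℝ)..(π/2), t^(p+1) * Real.sin ((n:ℝ)*t) := by
    rw [← intervalIntegral.integral_sub (by apply Continuous.intervalIntegrable; continuity)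
      (int_sin n (p+1))]
    congr 1; funext t; ring
  rw [hsub, hpow] at hpos
  linarith

lemma I_pos (n k : ℕ) (hn : 1 ≤ n) (hn4 : n % 4 = 1) : 0 < I n k := by
  have hn' : (0:ℝ) < n := by exact_mod_cast hn
  cases k with
  | zero =>
    have h := ibp_sin n 0 hn hn4
    simp only [pow_zero, one_mul] at h
    rw [base_cos n hn hn4] at h
    unfold I
    rw [show 2*0+1 = 0+1 from rfl, h]
    positivity
  | succ m =>
    have h1 := ibp_sin n (2*m+2) hn hn4
    have h2 := ibp_cos n (2*m+1) hn hn4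
    have h3 := crude n (2*m) hn
    unfold I
    rw [show 2*(m+1)+1 = (2*m+2)+1 from by ring, h1]
    rw [show (2*m+1)+1 = 2*m+2 from by ring] at h2
    rw [show (2*m)+1 = 2*m+1 from rfl] at h3
    rw [show (2*m)+2 = 2*m+2 from rfl] at h3
    rw [h2]
    push_cast at *
    have hpow : (0:ℝ) < (π/2)^(2*m+2) := by positivity
    have hfrac : (2*(m:ℝ)+1+1)/n * (∫ t in (0:ℝ)..(π/2), t^(2*m+1) * Real.sin ((n:ℝ)*t))
        < (π/2)^(2*m+2)/n := by
      rw [div_mul_eq_mul_div, div_lt_div_iff₀ hn' hn']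
      have h5 := (lt_div_iff₀ (by positivity : (0:ℝ) < 2*(m:ℝ)+2)).mp h3
      nlinarith [mul_lt_mul_of_pos_right h5 hn']
    have : 0 < (π/2)^(2*m+2)/n - (2*(m:ℝ)+1+1)/n * ∫ t in (0:ℝ)..(π/2), t^(2*m+1) * Real.sin ((n:ℝ)*t) := by
      linarith
    positivity

/-- For `n ≡ 1 (mod 4)` and `k ≥ 1`, `I_{n,k} < ((2k+1)/n²) (π/2)^{2k}`. -/
theorem I_upper_bound (n k : ℕ) (hn : 1 ≤ n) (hn4 : n % 4 = 1) (hk : 1 ≤ k) :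
    I n k < ((2 * (k : ℝ) + 1) / (n : ℝ) ^ 2) * (π / 2) ^ (2 * k) := by
  obtain ⟨m, rfl⟩ : ∃ m, k = m + 1 := ⟨k - 1, by omega⟩
  have hn' : (0:ℝ) < n := by exact_mod_cast hn
  have h1 := ibp_sin n (2*m+2) hn hn4
  have h2 := ibp_cos n (2*m+1) hn hn4
  rw [show (2*m+1)+1 = 2*m+2 from by ring] at h2
  have hS : 0 < ∫ t in (0:ℝ)..(π/2), t^(2*m+1) * Real.sin ((n:ℝ)*t) := by
    have := I_pos n m hn hn4
    unfold I at this
    exact this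
  unfold I
  rw [show 2*(m+1)+1 = (2*m+2)+1 from by ring, h1, h2]
  rw [show 2*(m+1) = 2*m+2 from by ring]
  push_cast
  set S := ∫ t in (0:ℝ)..(π/2), t^(2*m+1) * Real.sin ((n:ℝ)*t)
  have key : (2*(m:ℝ)+2+1)/n * ((π/2)^(2*m+2)/n - (2*(m:ℝ)+1+1)/n * S)
      = (2*((m:ℝ)+1)+1)/(n:ℝ)^2 * (π/2)^(2*m+2) - ((2*(m:ℝ)+3)*(2*(m:ℝ)+2)/(n:ℝ)^2) * S := by
    field_simp
    ring
  rw [key]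
  have hpos : 0 < ((2*(m:ℝ)+3)*(2*(m:ℝ)+2)/(n:ℝ)^2) * S := by positivity
  linarith
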